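/- The open unit ball of ℝ³ with the operation ⋆ is a quasigroup (in fact a loop with unit 0): for all β₂, β₃ ∈ ℝ³ with ‖β₂‖ < 1 and ‖β₃‖ < 1 there exists a unique x with ‖x‖ < 1 and x ⋆ β₂ = β₃; and for all β₁, β₃ ∈ ℝ³ with ‖β₁‖ < 1 and ‖β₃‖ < 1 there exists a unique y with ‖y‖ < 1 and β₁ ⋆ y = β₃, explicitly given by y = (−β₁) ⋆ β₃. -/

import Mathlib

open Matrix

noncomputable section

/-- Euclidean dot product on `ℝ³`. -/
def dot3 (u v : Fin 3 → ℝ) : ℝ := ∑ i, u i * v i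

/-- The Lorentz factor `γ(β) = 1/√(1 - ‖β‖²)`. -/
def gam (β : Fin 3 → ℝ) : ℝ := 1 / Real.sqrt (1 - dot3 β β)

/-- The Lorentz boost with velocity `β`, as a 4×4 matrix over `Unit ⊕ Fin 3`
(the `Unit` index is the time coordinate): time-time entry `γ`, time-space and
space-time entries `γ βᵢ`, space-space entries `δᵢⱼ + (γ²/(1+γ)) βᵢ βⱼ`. -/
def boost (β : Fin 3 → ℝ) : Matrix (Unit ⊕ Fin 3) (Unit ⊕ Fin 3) ℝ :=
  Matrix.fromBlocks (Matrix.of fun _ _ => gam β)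
    (Matrix.of fun _ j => gam β * β j)
    (Matrix.of fun i _ => gam β * β i)
    ((1 : Matrix (Fin 3) (Fin 3) ℝ) + ((gam β) ^ 2 / (1 + gam β)) • Matrix.vecMulVec β β)

/-- The spatial rotation `R(D) = diag(1, D)` as a 4×4 matrix. -/
def rot (D : Matrix (Fin 3) (Fin 3) ℝ) : Matrix (Unit ⊕ Fin 3) (Unit ⊕ Fin 3) ℝ :=
  Matrix.fromBlocks 1 0 0 D

/-- Relativistic composition of velocities:
`β₁ ⋆ β₂ = [β₁ + γ₁⁻¹ β₂ + (γ₁/(1+γ₁)) (β₁·β₂) β₁] / (1 + β₁·β₂)`. -/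
def vcomp (β₁ β₂ : Fin 3 → ℝ) : Fin 3 → ℝ :=
  (1 / (1 + dot3 β₁ β₂)) •
    (β₁ + (gam β₁)⁻¹ • β₂ + (gam β₁ / (1 + gam β₁)) • dot3 β₁ β₂ • β₁)

end

lemma dot3_comm (u v : Fin 3 → ℝ) : dot3 u v = dot3 v u := by
  simp [dot3, Fin.sum_univ_three]; ring

lemma dot3_self_nonneg (u : Fin 3 → ℝ) : 0 ≤ dot3 u u := by
  simp only [dot3, Fin.sum_univ_three]
  nlinarith [mul_self_nonneg (u 0), mul_self_nonneg (u 1), mul_self_nonneg (u 2)]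

lemma cs3 (u v : Fin 3 → ℝ) : (dot3 u v)^2 ≤ dot3 u u * dot3 v v := by
  simp only [dot3, Fin.sum_univ_three]
  nlinarith [sq_nonneg (u 0 * v 1 - u 1 * v 0), sq_nonneg (u 0 * v 2 - u 2 * v 0),
    sq_nonneg (u 1 * v 2 - u 2 * v 1)]

lemma one_add_dot_pos {u v : Fin 3 → ℝ} (hu : dot3 u u < 1) (hv : dot3 v v < 1) :
    0 < 1 + dot3 u v := by
  nlinarith [cs3 u v, dot3_self_nonneg u, dot3_self_nonneg v, sq_nonneg (dot3 u v)]

lemma gam_pos {u : Fin 3 → ℝ} (hu : dot3 u u < 1) : 0 < gam u := by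
  have : 0 < Real.sqrt (1 - dot3 u u) := Real.sqrt_pos.2 (by linarith)
  simp only [gam]; positivity

lemma one_le_gam {u : Fin 3 → ℝ} (hu : dot3 u u < 1) : 1 ≤ gam u := by
  rw [gam, le_div_iff₀ (Real.sqrt_pos.2 (by linarith)), one_mul]
  calc Real.sqrt (1 - dot3 u u) ≤ Real.sqrt 1 := by
        apply Real.sqrt_le_sqrt; have := dot3_self_nonneg u; linarith
    _ = 1 := Real.sqrt_one

lemma gam_sq {u : Fin 3 → ℝ} (hu : dot3 u u < 1) : (gam u)^2 * (1 - dot3 u u) = 1 := by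
  rw [gam, div_pow, one_pow, Real.sq_sqrt (by linarith)]
  rw [one_div, inv_mul_cancel₀ (by linarith)]

lemma dot3_self_eq {u : Fin 3 → ℝ} (hu : dot3 u u < 1) :
    dot3 u u = 1 - ((gam u)⁻¹)^2 := by
  have h := gam_sq hu
  have hg := (gam_pos hu).ne'
  field_simp at h ⊢
  nlinarith [h]

lemma dot3_neg_neg (u : Fin 3 → ℝ) : dot3 (-u) (-u) = dot3 u u := by
  simp [dot3, Fin.sum_univ_three]

lemma dot3_neg_left (u v : Fin 3 → ℝ) : dot3 (-u) v = -dot3 u v := by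
  simp [dot3, Fin.sum_univ_three]

lemma gam_neg (u : Fin 3 → ℝ) : gam (-u) = gam u := by
  rw [gam, gam, dot3_neg_neg]

lemma vcomp_apply (a b : Fin 3 → ℝ) (i : Fin 3) :
    vcomp a b i = (1 / (1 + dot3 a b)) *
      (a i + (gam a)⁻¹ * b i + (gam a / (1 + gam a)) * (dot3 a b * a i)) := by
  simp [vcomp]

lemma dot3_vcomp (u a b : Fin 3 → ℝ) :
    dot3 u (vcomp a b) = (1 / (1 + dot3 a b)) *
      (dot3 u a + (gam a)⁻¹ * dot3 u b + (gam a / (1 + gam a)) * (dot3 a b * dot3 u a)) := by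
  simp [vcomp, dot3, Fin.sum_univ_three]; ring

lemma key1 {a b : Fin 3 → ℝ} (ha : dot3 a a < 1) (hb : dot3 b b < 1) :
    (1 + dot3 a b)^2 * (1 - dot3 (vcomp a b) (vcomp a b))
      = (1 - dot3 a a) * (1 - dot3 b b) := by
  have hG := gam_pos ha
  have hG1 := one_le_gam ha
  have hD := one_add_dot_pos ha hb
  have hcc : dot3 (vcomp a b) (vcomp a b) = (1 / (1 + dot3 a b)) *
      (dot3 (vcomp a b) a + (gam a)⁻¹ * dot3 (vcomp a b) b
        + (gam a / (1 + gam a)) * (dot3 a b * dot3 (vcomp a b) a)) := by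
    rw [dot3_comm (vcomp a b) (vcomp a b)]; exact dot3_vcomp _ a b
  rw [hcc, dot3_comm (vcomp a b) a, dot3_comm (vcomp a b) b, dot3_vcomp a a b,
    dot3_vcomp b a b, dot3_comm b a, dot3_self_eq ha, dot3_self_eq hb]
  have h1 : (1 : ℝ) + dot3 a b ≠ 0 := ne_of_gt hD
  have h2 : gam a ≠ 0 := ne_of_gt hG
  have h2b : gam b ≠ 0 := ne_of_gt (gam_pos hb)
  have h3 : (1 : ℝ) + gam a ≠ 0 := by linarith
  field_simp [h1, h2, h2b, h3]
  ring

lemma vcomp_ball {a b : Fin 3 → ℝ} (ha : dot3 a a < 1) (hb : dot3 b b < 1) :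
    dot3 (vcomp a b) (vcomp a b) < 1 := by
  have h := key1 ha hb
  have hD := one_add_dot_pos ha hb
  have hp : 0 < (1 - dot3 a a) * (1 - dot3 b b) := mul_pos (by linarith) (by linarith)
  have hq : 0 < (1 + dot3 a b)^2 := pow_pos hD 2
  have h5 : 0 < (1 + dot3 a b)^2 * (1 - dot3 (vcomp a b) (vcomp a b)) := h ▸ hp
  nlinarith [h5, hq]

lemma gam_vcomp {a b : Fin 3 → ℝ} (ha : dot3 a a < 1) (hb : dot3 b b < 1) :
    gam (vcomp a b) = gam a * gam b * (1 + dot3 a b) := by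
  have h := key1 ha hb
  have hD := one_add_dot_pos ha hb
  have hx : (0:ℝ) < 1 - dot3 a a := by linarith
  have hy : (0:ℝ) < 1 - dot3 b b := by linarith
  have hsx : 0 < Real.sqrt (1 - dot3 a a) := Real.sqrt_pos.2 hx
  have hsy : 0 < Real.sqrt (1 - dot3 b b) := Real.sqrt_pos.2 hy
  have h1 : 1 - dot3 (vcomp a b) (vcomp a b)
      = ((1 - dot3 a a) * (1 - dot3 b b)) / (1 + dot3 a b)^2 := by
    rw [eq_div_iff (by positivity)]; linarith [h]
  have h2 : ((1 - dot3 a a) * (1 - dot3 b b)) / (1 + dot3 a b)^2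
      = (Real.sqrt (1 - dot3 a a) * Real.sqrt (1 - dot3 b b) / (1 + dot3 a b))^2 := by
    rw [div_pow, mul_pow, Real.sq_sqrt hx.le, Real.sq_sqrt hy.le]
  rw [gam, h1, h2, Real.sqrt_sq (div_nonneg (by positivity) hD.le), gam, gam]
  field_simp

lemma left_inv {a b : Fin 3 → ℝ} (ha : dot3 a a < 1) (hb : dot3 b b < 1) :
    vcomp (-a) (vcomp a b) = b := by
  have hG := gam_pos ha
  have hG1 := one_le_gam ha
  have hD := one_add_dot_pos ha hb
  have hc := vcomp_ball ha hb
  have hna : dot3 (-a) (-a) < 1 := by rw [dot3_neg_neg]; exact ha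
  have hA := one_add_dot_pos hna hc
  have hAval : dot3 (-a) (vcomp a b) = -((1 / (1 + dot3 a b)) *
      ((1 - ((gam a)⁻¹)^2) + (gam a)⁻¹ * dot3 a b +
        (gam a / (1 + gam a)) * (dot3 a b * (1 - ((gam a)⁻¹)^2)))) := by
    rw [dot3_neg_left, dot3_vcomp a a b, ← dot3_self_eq ha]
  have h1 : (1:ℝ) + dot3 a b ≠ 0 := ne_of_gt hD
  have h2 : gam a ≠ 0 := ne_of_gt hG
  have h3 : (1:ℝ) + gam a ≠ 0 := by linarith
  have h4 : (1:ℝ) + dot3 (-a) (vcomp a b) ≠ 0 := ne_of_gt hA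
  rw [hAval] at h4
  funext i
  rw [vcomp_apply (-a) (vcomp a b) i, gam_neg, hAval, vcomp_apply a b i]
  simp only [Pi.neg_apply]
  rw [one_div, inv_mul_eq_div, div_eq_iff h4]
  field_simp [h1, h2, h3]
  ring

lemma dot3_comb (c d : ℝ) (u v : Fin 3 → ℝ) :
    dot3 (c • u - d • v) (c • u - d • v)
      = c^2 * dot3 u u - 2*c*d*dot3 u v + d^2 * dot3 v v := by
  simp [dot3, Fin.sum_univ_three]; ring

lemma dot3_smul_smul (t : ℝ) (z : Fin 3 → ℝ) :
    dot3 (t • z) (t • z) = t^2 * dot3 z z := by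
  simp [dot3, Fin.sum_univ_three]; ring

lemma dot3_smul_sub_left (t c d : ℝ) (u v w : Fin 3 → ℝ) :
    dot3 (t • (c • u - d • v)) w = t * (c * dot3 u w - d * dot3 v w) := by
  simp [dot3, Fin.sum_univ_three]; ring

lemma gam_eq_of {x : Fin 3 → ℝ} {g : ℝ} (hg : 0 < g) (h : dot3 x x = 1 - 1/g^2) :
    gam x = g := by
  rw [gam, h]
  rw [show (1:ℝ) - (1 - 1/g^2) = (1/g)^2 by field_simp; ring, Real.sqrt_sq (by positivity)]
  field_simp

lemma vcomp_part1 {β₂ β₃ : Fin 3 → ℝ} (h2 : dot3 β₂ β₂ < 1) (h3 : dot3 β₃ β₃ < 1) :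
    ∃! x : Fin 3 → ℝ, dot3 x x < 1 ∧ vcomp x β₂ = β₃ := by
  have hG2 : 1 ≤ gam β₂ := one_le_gam h2
  have hG3 : 1 ≤ gam β₃ := one_le_gam h3
  have hG2p : 0 < gam β₂ := gam_pos h2
  have hG3p : 0 < gam β₃ := gam_pos h3
  set G2 := gam β₂
  set G3 := gam β₃
  set s := dot3 β₂ β₃ with hs
  have hq : dot3 β₂ β₂ = 1 - (G2⁻¹)^2 := dot3_self_eq h2
  have hr : dot3 β₃ β₃ = 1 - (G3⁻¹)^2 := dot3_self_eq h3
  have hs1 : 0 < 1 + s := one_add_dot_pos h2 h3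
  have hs2 : s < 1 := by
    nlinarith [cs3 β₂ β₃, dot3_self_nonneg β₂, dot3_self_nonneg β₃]
  have hden : 0 < G2*G3*(1+s) + 1 := by nlinarith [mul_pos (mul_pos hG2p hG3p) hs1]
  have hnum : 0 < G2^2 + G3^2 - 1 + G2*G3*(1-s) := by
    nlinarith [mul_pos (mul_pos hG2p hG3p) (show (0:ℝ) < 1 - s by linarith)]
  set g : ℝ := (G2^2 + G3^2 - 1 + G2*G3*(1-s)) / (G2*G3*(1+s) + 1) with hgdef
  have hgpos : 0 < g := div_pos hnum hden
  have hMval : dot3 (G3 • β₃ - G2 • β₂) (G3 • β₃ - G2 • β₂)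
      = G2^2 + G3^2 - 2*G2*G3*s - 2 := by
    rw [dot3_comb, hq, hr, dot3_comm β₃ β₂, ← hs]
    field_simp
    ring
  have hM0 : 0 ≤ G2^2 + G3^2 - 2*G2*G3*s - 2 :=
    hMval ▸ dot3_self_nonneg _
  have hg1 : 1 ≤ g := by
    rw [hgdef, le_div_iff₀ hden]; nlinarith
  set t : ℝ := (1+g)/(g*(G2+G3)) with ht
  set x₀ : Fin 3 → ℝ := t • (G3 • β₃ - G2 • β₂) with hx0
  have hxx : dot3 x₀ x₀ = 1 - 1/g^2 := by
    rw [hx0, dot3_smul_smul, hMval, ht, hgdef]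
    field_simp
    ring
  have hball : dot3 x₀ x₀ < 1 := by
    rw [hxx]; have : 0 < 1/g^2 := by positivity
    linarith
  have hgamx : gam x₀ = g := gam_eq_of hgpos hxx
  have hp : dot3 x₀ β₂ = t * (G3*s - G2*(1 - (G2⁻¹)^2)) := by
    rw [hx0, dot3_smul_sub_left, dot3_comm β₃ β₂, ← hs, hq]
  have hpD : 0 < 1 + dot3 x₀ β₂ := one_add_dot_pos hball h2
  have hpD' : 1 + t * (G3*s - G2*(1 - (G2⁻¹)^2)) ≠ 0 := by rw [← hp]; exact ne_of_gt hpD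
  have heq : vcomp x₀ β₂ = β₃ := by
    funext i
    rw [vcomp_apply, hgamx, hp]
    have hxi : x₀ i = t * (G3 * β₃ i - G2 * β₂ i) := by
      rw [hx0]; simp [mul_sub]
    rw [hxi, one_div, inv_mul_eq_div, div_eq_iff hpD', ht, hgdef]
    field_simp
    ring
  refine ⟨x₀, ⟨hball, heq⟩, ?_⟩
  rintro x ⟨hx, he⟩
  have hgx1 : 1 ≤ gam x := one_le_gam hx
  have hgxp : 0 < gam x := gam_pos hx
  set gx := gam x with hgxdef
  have hpD2 : 0 < 1 + dot3 x β₂ := one_add_dot_pos hx h2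
  have hgam3 : G3 = gx * G2 * (1 + dot3 x β₂) := by
    rw [← gam_vcomp hx h2, he]
  have hxi : ∀ i, gx*(G2+G3) * x i = (1+gx) * (G3 * β₃ i - G2 * β₂ i) := by
    intro i
    have hei := congrFun he i
    rw [vcomp_apply, ← hgxdef] at hei
    field_simp [ne_of_gt hpD2, ne_of_gt hgxp,
      (show (1:ℝ)+gx ≠ 0 by linarith)] at hei
    linear_combination G2 * hei + (gx * x i - (1+gx) * β₃ i) * hgam3
  have hveq : (gx*(G2+G3)) • x = (1+gx) • (G3 • β₃ - G2 • β₂) := by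
    funext i
    simpa [mul_sub] using hxi i
  have hsc : (gx*(G2+G3))^2 * dot3 x x
      = (1+gx)^2 * (G2^2 + G3^2 - 2*G2*G3*s - 2) := by
    rw [← dot3_smul_smul, hveq, dot3_smul_smul, hMval]
  rw [dot3_self_eq hx, ← hgxdef] at hsc
  have h1gx : (0:ℝ) < 1 + gx := by linarith
  have hsc' : (G2+G3)^2*(gx^2-1) = (1+gx)^2 * (G2^2 + G3^2 - 2*G2*G3*s - 2) := by
    rw [← hsc]; field_simp [ne_of_gt hgxp]
  have hlin : (G2+G3)^2*(gx-1) = (1+gx) * (G2^2 + G3^2 - 2*G2*G3*s - 2) :=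
    mul_left_cancel₀ (ne_of_gt h1gx) (by linear_combination hsc')
  have hgxg : gx = g := by
    rw [hgdef, eq_div_iff (ne_of_gt hden)]
    linear_combination (1/2 : ℝ) * hlin
  funext i
  have h1 := hxi i
  rw [hgxg] at h1
  have hxi0 : x₀ i = t * (G3 * β₃ i - G2 * β₂ i) := by
    rw [hx0]; simp [mul_sub]
  rw [hxi0, ht]
  have hgG : g*(G2+G3) ≠ 0 := by positivity
  field_simp
  linear_combination h1

/-- The open unit ball of `ℝ³` with the operation `⋆` is a quasigroup (in fact
a loop with unit `0`): the equations `x ⋆ β₂ = β₃` and `β₁ ⋆ y = β₃` have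
unique solutions in the ball, the latter explicitly given by
`y = (−β₁) ⋆ β₃`. -/
theorem vcomp_quasigroup :
    (∀ β₂ β₃ : Fin 3 → ℝ, dot3 β₂ β₂ < 1 → dot3 β₃ β₃ < 1 →
      ∃! x : Fin 3 → ℝ, dot3 x x < 1 ∧ vcomp x β₂ = β₃) ∧
    (∀ β₁ β₃ : Fin 3 → ℝ, dot3 β₁ β₁ < 1 → dot3 β₃ β₃ < 1 →
      (∃! y : Fin 3 → ℝ, dot3 y y < 1 ∧ vcomp β₁ y = β₃) ∧
      dot3 (vcomp (-β₁) β₃) (vcomp (-β₁) β₃) < 1 ∧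
      vcomp β₁ (vcomp (-β₁) β₃) = β₃) := by
  constructor
  · intro β₂ β₃ h2 h3
    exact vcomp_part1 h2 h3
  · intro β₁ β₃ h1 h3
    have hn1 : dot3 (-β₁) (-β₁) < 1 := by rw [dot3_neg_neg]; exact h1
    have hb : dot3 (vcomp (-β₁) β₃) (vcomp (-β₁) β₃) < 1 := vcomp_ball hn1 h3
    have hex : vcomp β₁ (vcomp (-β₁) β₃) = β₃ := by
      have h := left_inv hn1 h3
      rwa [neg_neg] at h
    refine ⟨⟨vcomp (-β₁) β₃, ⟨hb, hex⟩, ?_⟩, hb, hex⟩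
    rintro y ⟨hy, hye⟩
    have h := left_inv h1 hy
    rw [hye] at h
    exact h.symm
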